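/- For every w ∈ ℍ one has e^{C(w)} ≠ e^{C(w̄)} (so χ_L(w) and η_L(w) are well defined); moreover the complex numbers χ_L(w) and η_L(w) are real, and, setting χ = χ_L(w) and η = η_L(w), one has f′_{(χ,η)}(w) = 0. -/

import Mathlib

open MeasureTheory Complex Filter Set

noncomputable section

/-- The support of a measure on `ℝ`. -/
def msupport (μ : Measure ℝ) : Set ℝ := {x | ∀ U ∈ nhds x, μ U ≠ 0}

/-- The Cauchy transform `C(w) = ∫ (w - x)⁻¹ dμ(x)`. -/
def cauchy (μ : Measure ℝ) (w : ℂ) : ℂ := ∫ x, (w - (x : ℂ))⁻¹ ∂μ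



lemma sub_ofReal_ne_zero {w : ℂ} (hw : w.im ≠ 0) (x : ℝ) : w - (x : ℂ) ≠ 0 := by
  intro h
  apply hw
  have := congrArg Complex.im h
  simpa using this

lemma integrable_inv (μ : Measure ℝ) [IsFiniteMeasure μ] {w : ℂ} (hw : w.im ≠ 0) :
    Integrable (fun x : ℝ => (w - (x : ℂ))⁻¹) μ := by
  refine Integrable.mono' (integrable_const (|w.im|⁻¹))
    (Continuous.aestronglyMeasurable
      ((continuous_const.sub Complex.continuous_ofReal).inv₀
        (fun x => sub_ofReal_ne_zero hw x)))
    (Filter.Eventually.of_forall (fun x => ?_))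
  rw [norm_inv]
  have h1 : |w.im| ≤ ‖w - (x : ℂ)‖ := by
    calc |w.im| = |(w - (x : ℂ)).im| := by simp
      _ ≤ ‖w - (x : ℂ)‖ := Complex.abs_im_le_norm _
      _ = ‖w - (x : ℂ)‖ := rfl
  exact inv_anti₀ (abs_pos.mpr hw) h1

lemma cauchy_conj (μ : Measure ℝ) (w : ℂ) :
    cauchy μ ((starRingEnd ℂ) w) = (starRingEnd ℂ) (cauchy μ w) := by
  rw [cauchy, cauchy, ← integral_conj]
  congr 1
  funext x
  rw [map_inv₀, map_sub, Complex.conj_ofReal]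

lemma normSq_sub_ofReal (w : ℂ) (x : ℝ) :
    Complex.normSq (w - (x : ℂ)) = (x - w.re) ^ 2 + w.im ^ 2 := by
  rw [Complex.normSq_apply]
  simp [Complex.sub_re, Complex.sub_im]
  ring

lemma cauchy_im_bounds (μ : Measure ℝ) (a b : ℝ) [IsProbabilityMeasure μ]
    (hle : μ ≤ volume) (hsupp : msupport μ ⊆ Set.Icc a b) (hab : a ≤ b)
    {w : ℂ} (hw : 0 < w.im) :
    -Real.pi < (cauchy μ w).im ∧ (cauchy μ w).im < 0 := by
  set v := w.im with hv
  set u := w.re with hu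
  set p : ℝ → ℝ := fun x => v / ((x - u) ^ 2 + v ^ 2) with hp
  have hden : ∀ x : ℝ, 0 < (x - u) ^ 2 + v ^ 2 := fun x => by positivity
  have hppos : ∀ x, 0 < p x := fun x => div_pos hw (hden x)
  have hcont : Continuous p :=
    continuous_const.div (by continuity) (fun x => (hden x).ne')
  have hpint : Integrable p μ := by
    refine Integrable.mono' (integrable_const (v⁻¹)) hcont.aestronglyMeasurable
      (Filter.Eventually.of_forall (fun x => ?_))
    rw [Real.norm_eq_abs, abs_of_pos (hppos x), hp]
    rw [div_le_iff₀ (hden x)]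
    rw [inv_mul_eq_div, le_div_iff₀ hw]
    nlinarith [sq_nonneg (x - u)]
  have him : (cauchy μ w).im = -∫ x, p x ∂μ := by
    have h1 := integral_im (μ := μ) (f := fun x : ℝ => (w - (x : ℂ))⁻¹)
      (integrable_inv μ hw.ne')
    simp only [RCLike.im_to_complex] at h1
    rw [cauchy, ← h1, ← integral_neg]
    congr 1
    funext x
    have : ((w - (x : ℂ))⁻¹).im = -(p x) := by
      rw [Complex.inv_im, Complex.sub_im, Complex.ofReal_im, normSq_sub_ofReal, hp]
      simp [neg_div, hv, hu]
    simpa using this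
  have hpos : 0 < ∫ x, p x ∂μ := by
    rw [integral_pos_iff_support_of_nonneg (fun x => (hppos x).le) hpint]
    have hsup : Function.support p = Set.univ := by
      ext x; simp [Function.mem_support, (hppos x).ne']
    rw [hsup, measure_univ]
    exact zero_lt_one
  have hnull : μ (Set.Icc a b)ᶜ = 0 := by
    refine measure_null_of_locally_null _ (fun x hx => ?_)
    have hxs : x ∉ msupport μ := fun h => hx (hsupp h)
    simp only [msupport, Set.mem_setOf_eq, not_forall] at hxs
    push_neg at hxs
    obtain ⟨U, hU, hU0⟩ := hxs
    exact ⟨U, nhdsWithin_le_nhds hU, hU0⟩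
  have hres : μ ≤ volume.restrict (Set.Icc a b) := by
    rw [Measure.le_iff]
    intro s hs
    rw [Measure.restrict_apply hs]
    calc μ s ≤ μ (s ∩ Set.Icc a b) + μ (s \ Set.Icc a b) :=
          measure_le_inter_add_diff μ s _
      _ = μ (s ∩ Set.Icc a b) := by
          rw [measure_mono_null (Set.diff_subset_compl s _) hnull, add_zero]
      _ ≤ volume (s ∩ Set.Icc a b) := Measure.le_iff'.mp hle _
  have hIccInt : IntegrableOn p (Set.Icc a b) volume := hcont.integrableOn_Icc
  have hle2 : ∫ x, p x ∂μ ≤ ∫ x in Set.Icc a b, p x :=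
    integral_mono_measure hres (Filter.Eventually.of_forall (fun x => (hppos x).le)) hIccInt
  have hval : ∫ x in Set.Icc a b, p x =
      Real.arctan ((b - u) / v) - Real.arctan ((a - u) / v) := by
    rw [MeasureTheory.integral_Icc_eq_integral_Ioc, ← intervalIntegral.integral_of_le hab]
    have h1 : ∀ x : ℝ, p x = (fun y => v⁻¹ * ((1 : ℝ) + (y / v) ^ 2)⁻¹) (x - u) := by
      intro x
      have hx := (hden x).ne'
      have hv0 := hw.ne'
      simp only [hp]
      rw [div_eq_iff hx, eq_comm]
      field_simp
      ring
    calc ∫ x in a..b, p x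
        = ∫ x in a..b, (fun y => v⁻¹ * ((1 : ℝ) + (y / v) ^ 2)⁻¹) (x - u) := by
          simp_rw [h1]
      _ = ∫ x in a - u..b - u, v⁻¹ * ((1 : ℝ) + (x / v) ^ 2)⁻¹ :=
          intervalIntegral.integral_comp_sub_right (fun y => v⁻¹ * ((1 : ℝ) + (y / v) ^ 2)⁻¹) u
      _ = ∫ x in a - u..b - u, (fun y => v⁻¹ * ((1 : ℝ) + y ^ 2)⁻¹) (x / v) := rfl
      _ = v • ∫ x in (a - u) / v..(b - u) / v, v⁻¹ * ((1 : ℝ) + x ^ 2)⁻¹ :=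
          intervalIntegral.integral_comp_div (fun y => v⁻¹ * ((1 : ℝ) + y ^ 2)⁻¹) hw.ne'
      _ = Real.arctan ((b - u) / v) - Real.arctan ((a - u) / v) := by
          rw [intervalIntegral.integral_const_mul, integral_inv_one_add_sq, smul_eq_mul]
          field_simp
  have hlt : ∫ x, p x ∂μ < Real.pi := by
    have h1 := Real.arctan_lt_pi_div_two ((b - u) / v)
    have h2 := Real.neg_pi_div_two_lt_arctan ((a - u) / v)
    rw [hval] at hle2
    linarith
  constructor
  · rw [him]; linarith
  · rw [him]; linarith

/-- `f′_{(χ,η)}(w) = C(w) + Log (w - χ) - Log (w - χ - η + 1)`. -/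
def fprime (μ : Measure ℝ) (χ η : ℝ) (w : ℂ) : ℂ :=
  cauchy μ w + Complex.log (w - (χ : ℂ)) - Complex.log (w - (χ : ℂ) - (η : ℂ) + 1)

/-- `χ_L(w) = w + (w - w̄)(e^{C(w̄)} - 1)/(e^{C(w)} - e^{C(w̄)})`. -/
def chiL (μ : Measure ℝ) (w : ℂ) : ℂ :=
  w + (w - (starRingEnd ℂ) w) * (Complex.exp (cauchy μ ((starRingEnd ℂ) w)) - 1) /
    (Complex.exp (cauchy μ w) - Complex.exp (cauchy μ ((starRingEnd ℂ) w)))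

/-- `η_L(w) = 1 + (w - w̄)(e^{C(w)} - 1)(e^{C(w̄)} - 1)/(e^{C(w)} - e^{C(w̄)})`. -/
def etaL (μ : Measure ℝ) (w : ℂ) : ℂ :=
  1 + (w - (starRingEnd ℂ) w) * (Complex.exp (cauchy μ w) - 1) *
      (Complex.exp (cauchy μ ((starRingEnd ℂ) w)) - 1) /
    (Complex.exp (cauchy μ w) - Complex.exp (cauchy μ ((starRingEnd ℂ) w)))

/-- For every `w ∈ ℍ`: `e^{C(w)} ≠ e^{C(w̄)}` (so `χ_L(w)` and `η_L(w)` are well defined),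
`χ_L(w)` and `η_L(w)` are real, and `f′_{(χ_L(w), η_L(w))}(w) = 0`. -/
theorem chiL_etaL_real_and_root (μ : Measure ℝ) (a b : ℝ) [IsProbabilityMeasure μ]
    (hle : μ ≤ volume) (hsupp : msupport μ ⊆ Set.Icc a b)
    (ha : a ∈ msupport μ) (hb : b ∈ msupport μ) (hab : 1 < b - a) :
    ∀ w : ℂ, 0 < w.im →
      Complex.exp (cauchy μ w) ≠ Complex.exp (cauchy μ ((starRingEnd ℂ) w)) ∧
      (chiL μ w).im = 0 ∧ (etaL μ w).im = 0 ∧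
      fprime μ (chiL μ w).re (etaL μ w).re w = 0 := by

  intro w hw
  have hab' : a ≤ b := by linarith
  set z := Complex.exp (cauchy μ w) with hzdef
  have hz' : Complex.exp (cauchy μ ((starRingEnd ℂ) w)) = (starRingEnd ℂ) z := by
    rw [cauchy_conj, ← Complex.exp_conj]
  obtain ⟨hC1, hC2⟩ := cauchy_im_bounds μ a b hle hsupp hab' hw
  have hsin : Real.sin (cauchy μ w).im < 0 :=
    Real.sin_neg_of_neg_of_neg_pi_lt hC2 hC1
  have hzim : z.im < 0 := by
    rw [hzdef, Complex.exp_im]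
    exact mul_neg_of_pos_of_neg (Real.exp_pos _) hsin
  have hne : z ≠ (starRingEnd ℂ) z := by
    intro h
    have : z.im = 0 := Complex.conj_eq_iff_im.mp h.symm
    linarith
  have hd : z - (starRingEnd ℂ) z ≠ 0 := sub_ne_zero.mpr hne
  have hd' : (starRingEnd ℂ) z - z ≠ 0 := sub_ne_zero.mpr (Ne.symm hne)
  refine ⟨by rw [hz']; exact hne, ?_⟩
  have hchi : chiL μ w = w + (w - (starRingEnd ℂ) w) * ((starRingEnd ℂ) z - 1) /
      (z - (starRingEnd ℂ) z) := by
    rw [chiL, hz']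
  have heta : etaL μ w = 1 + (w - (starRingEnd ℂ) w) * (z - 1) * ((starRingEnd ℂ) z - 1) /
      (z - (starRingEnd ℂ) z) := by
    rw [etaL, hz']
  have hchiconj : (starRingEnd ℂ) (chiL μ w) = chiL μ w := by
    rw [hchi]
    simp only [map_add, map_div₀, map_mul, map_sub, map_one, Complex.conj_conj]
    field_simp
    ring
  have hetaconj : (starRingEnd ℂ) (etaL μ w) = etaL μ w := by
    rw [heta]
    simp only [map_add, map_div₀, map_mul, map_sub, map_one, Complex.conj_conj]
    field_simp
    ring
  have himχ : (chiL μ w).im = 0 := Complex.conj_eq_iff_im.mp hchiconj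
  have himη : (etaL μ w).im = 0 := Complex.conj_eq_iff_im.mp hetaconj
  refine ⟨himχ, himη, ?_⟩
  have hχ : (((chiL μ w).re : ℝ) : ℂ) = chiL μ w := Complex.conj_eq_iff_re.mp hchiconj
  have hη : (((etaL μ w).re : ℝ) : ℂ) = etaL μ w := Complex.conj_eq_iff_re.mp hetaconj
  rw [fprime, hχ, hη]
  set A := w - chiL μ w with hAdef
  set B := w - chiL μ w - etaL μ w + 1 with hBdef
  have hAim : A.im = w.im := by
    rw [hAdef, Complex.sub_im, himχ, sub_zero]
  have hBim : B.im = w.im := by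
    rw [hBdef, Complex.add_im, Complex.sub_im, Complex.sub_im, himχ, himη, Complex.one_im]
    ring
  have hA0 : A ≠ 0 := fun h => by rw [h] at hAim; simp at hAim; linarith [hw, hAim]
  have hB0 : B ≠ 0 := fun h => by rw [h] at hBim; simp at hBim; linarith [hw, hBim]
  have hz0 : z ≠ 0 := Complex.exp_ne_zero _
  have hB : B = A * z := by
    rw [hBdef, hAdef, hchi, heta]
    field_simp
    ring
  have hexp : Complex.exp (Complex.log A - Complex.log B) =
      Complex.exp (-(cauchy μ w)) := by
    rw [Complex.exp_sub, Complex.exp_log hA0, Complex.exp_log hB0, hB, Complex.exp_neg,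
      ← hzdef, div_mul_cancel_left₀ hA0]
  obtain ⟨n, hn⟩ := Complex.exp_eq_exp_iff_exists_int.mp hexp
  have hargA1 : 0 < Complex.arg A := by
    rcases lt_or_eq_of_le (Complex.arg_nonneg_iff.mpr (by rw [hAim]; exact hw.le)) with h | h
    · exact h
    · exfalso
      have := (Complex.arg_eq_zero_iff.mp h.symm).2
      rw [hAim] at this; linarith
  have hargA2 : Complex.arg A < Real.pi :=
    Complex.arg_lt_pi_iff.mpr (Or.inr (by rw [hAim]; exact hw.ne'))
  have hargB1 : 0 < Complex.arg B := by
    rcases lt_or_eq_of_le (Complex.arg_nonneg_iff.mpr (by rw [hBim]; exact hw.le)) with h | h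
    · exact h
    · exfalso
      have := (Complex.arg_eq_zero_iff.mp h.symm).2
      rw [hBim] at this; linarith
  have hargB2 : Complex.arg B < Real.pi :=
    Complex.arg_lt_pi_iff.mpr (Or.inr (by rw [hBim]; exact hw.ne'))
  have him_eq := congrArg Complex.im hn
  simp only [Complex.sub_im, Complex.log_im, Complex.add_im, Complex.neg_im,
    Complex.mul_im, Complex.intCast_re, Complex.intCast_im, Complex.mul_re,
    Complex.ofReal_re, Complex.ofReal_im, Complex.I_re, Complex.I_im,
    Complex.re_ofNat, Complex.im_ofNat] at him_eq
  have hn0 : n = 0 := by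
    have hpi := Real.pi_pos
    have habs : |(n : ℝ)| < 1 := by
      rw [abs_lt]
      constructor <;> nlinarith
    have : |n| < 1 := by exact_mod_cast (by push_cast; exact habs : ((|n| : ℤ) : ℝ) < 1)
    exact Int.abs_lt_one_iff.mp this
  rw [hn0] at hn
  simp only [Int.cast_zero, zero_mul, add_zero] at hn
  rw [add_sub_assoc, hn, add_neg_cancel]
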